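/- Let (𝔜, 𝒴) be a measurable space, let a be a nonzero finite measure on 𝔜, let b̲ > 0 and let b: 𝔜 → [b̲, ∞) be measurable, let P_0 be a probability measure on 𝔜 with ∫ b dP_0 < ∞, and let X_1, X_2, … be i.i.d. random variables with law P_0. Define ψ(λ) = ∫ log(1 + λ/b(y)) da(y) and, for each n ≥ 1 and λ > 0, f_n(λ) = λ^{n−1} e^{−ψ(λ)} Π_{i=1}^n (λ + b(X_i))^{−1}. Then for every d > 0 and every c with 0 < c < b̲/(a(𝔜) + 1 + d), almost surely n^d · ( ∫_0^{c n / log n} f_n(λ) dλ ) / ( ∫_0^∞ f_n(λ) dλ ) → 0 as n → ∞. -/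

import Mathlib

open MeasureTheory ProbabilityTheory Real Filter

lemma aux_slope : Tendsto (fun y : ℝ => Real.log (1+y)/y) (nhdsWithin (0:ℝ) {(0:ℝ)}ᶜ) (nhds 1) := by
  have h : HasDerivAt (fun y : ℝ => Real.log (1+y)) 1 0 := by
    have h1 : HasDerivAt (fun y : ℝ => 1 + y) 1 0 := (hasDerivAt_id 0).const_add 1
    have h2 := HasDerivAt.comp (x := (0:ℝ)) (Real.hasDerivAt_log (by norm_num : (1:ℝ)+0 ≠ 0)) h1
    simpa [Function.comp_def] using h2
  have := hasDerivAt_iff_tendsto_slope.1 h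
  refine this.congr' ?_
  filter_upwards [self_mem_nhdsWithin] with y hy
  simp [slope_def_field]

lemma aux_logdiv : Tendsto (fun x : ℝ => Real.log x / x) atTop (nhds 0) := by
  have := Real.tendsto_pow_log_div_mul_add_atTop 1 0 1 one_ne_zero
  simpa using this

lemma aux_nat_atTop : Tendsto (fun n : ℕ => (n:ℝ)) atTop atTop := tendsto_natCast_atTop_atTop

-- log n / n → 0 over ℕ
lemma aux_logn : Tendsto (fun n : ℕ => Real.log n / n) atTop (nhds 0) :=
  aux_logdiv.comp aux_nat_atTop

lemma aux_loglog : Tendsto (fun n : ℕ => Real.log (Real.log n) / Real.log n) atTop (nhds 0) :=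
  aux_logdiv.comp (Real.tendsto_log_atTop.comp aux_nat_atTop)

lemma aux_ratio_one : Tendsto (fun n : ℕ => ((n:ℝ)-1)/n) atTop (nhds 1) := by
  have h : Tendsto (fun n : ℕ => 1 - 1/(n:ℝ)) atTop (nhds 1) := by
    simpa using tendsto_const_nhds.sub (tendsto_one_div_atTop_nhds_zero_nat (𝕜 := ℝ))
  refine h.congr' ?_
  filter_upwards [eventually_ge_atTop 1] with n hn
  have : (n:ℝ) ≠ 0 := by positivity
  field_simp

lemma aux_T2 (blow c : ℝ) (hblow : 0 < blow) (hc : 0 < c) :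
    Tendsto (fun n : ℕ => ((n:ℝ)-1) * Real.log (1 + blow/(c*n/Real.log n)) / Real.log n)
      atTop (nhds (blow/c)) := by
  set x : ℕ → ℝ := fun n => blow * Real.log n / (c*n) with hx
  have hx0 : Tendsto x atTop (nhds 0) := by
    have : Tendsto (fun n : ℕ => (blow/c) * (Real.log n / n)) atTop (nhds ((blow/c)*0)) :=
      tendsto_const_nhds.mul aux_logn
    simpa [hx, div_mul_div_comm] using this
  have hxpos : ∀ᶠ n : ℕ in atTop, 0 < x n := by
    filter_upwards [eventually_ge_atTop 2] with n hn
    have h1 : (1:ℝ) < n := by exact_mod_cast Nat.lt_of_lt_of_le Nat.one_lt_two hn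
    have : 0 < Real.log n := Real.log_pos h1
    have hn0 : (0:ℝ) < n := by linarith
    positivity
  have hxw : Tendsto x atTop (nhdsWithin (0:ℝ) {(0:ℝ)}ᶜ) := by
    refine tendsto_nhdsWithin_of_tendsto_nhds_of_eventually_within _ hx0 ?_
    filter_upwards [hxpos] with n hn using (ne_of_gt hn)
  have hslope : Tendsto (fun n : ℕ => Real.log (1 + x n) / x n) atTop (nhds 1) :=
    aux_slope.comp hxw
  have hmain : Tendsto (fun n : ℕ => (((n:ℝ)-1)/n) * ((blow/c) * (Real.log (1 + x n) / x n)))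
      atTop (nhds (1 * ((blow/c) * 1))) :=
    aux_ratio_one.mul (tendsto_const_nhds.mul hslope)
  rw [show (blow/c) = 1 * ((blow/c) * 1) by ring]
  refine hmain.congr' ?_
  filter_upwards [eventually_ge_atTop 2, hxpos] with n hn hxp
  have h1 : (1:ℝ) < n := by exact_mod_cast Nat.lt_of_lt_of_le Nat.one_lt_two hn
  have hlog : 0 < Real.log n := Real.log_pos h1
  have hn0 : (0:ℝ) < n := by linarith
  have ht : blow/(c*n/Real.log n) = x n := by
    rw [hx]; field_simp
  rw [ht]
  rw [hx] at hxp ⊢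
  field_simp

lemma aux_T3 (c : ℝ) (hc : 0 < c) :
    Tendsto (fun n : ℕ => Real.log (c*n/Real.log n) / Real.log n) atTop (nhds 1) := by
  have h : Tendsto (fun n : ℕ => Real.log c / Real.log n + 1 - Real.log (Real.log n) / Real.log n)
      atTop (nhds (0 + 1 - 0)) := by
    refine Tendsto.sub (Tendsto.add ?_ tendsto_const_nhds) aux_loglog
    exact tendsto_const_nhds.div_atTop (Real.tendsto_log_atTop.comp aux_nat_atTop)
  rw [show (1:ℝ) = 0 + 1 - 0 by ring]
  refine h.congr' ?_
  filter_upwards [eventually_ge_atTop 2] with n hn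
  have h1 : (1:ℝ) < n := by exact_mod_cast Nat.lt_of_lt_of_le Nat.one_lt_two hn
  have hlog : 0 < Real.log n := Real.log_pos h1
  have hn0 : (0:ℝ) < n := by linarith
  rw [Real.log_div (by positivity) (ne_of_gt hlog), Real.log_mul (ne_of_gt hc) (ne_of_gt hn0)]
  field_simp

lemma aux_T4 (blow : ℝ) (hblow : 0 < blow) :
    Tendsto (fun n : ℕ => Real.log (1 + 2*n/blow) / Real.log n) atTop (nhds 1) := by
  have hlim : Tendsto (fun n : ℕ => 1/(n:ℝ) + 2/blow) atTop (nhds (0 + 2/blow)) :=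
    tendsto_one_div_atTop_nhds_zero_nat.add tendsto_const_nhds
  have hlog2 : Tendsto (fun n : ℕ => Real.log (1/(n:ℝ) + 2/blow)) atTop (nhds (Real.log (0 + 2/blow))) := by
    exact (Real.continuousAt_log (by positivity)).tendsto.comp hlim
  have h : Tendsto (fun n : ℕ => Real.log (1/(n:ℝ) + 2/blow) / Real.log n + 1)
      atTop (nhds (0 + 1)) := by
    refine Tendsto.add ?_ tendsto_const_nhds
    exact hlog2.div_atTop (Real.tendsto_log_atTop.comp aux_nat_atTop)
  rw [(by norm_num : (0:ℝ) + 1 = 1)] at h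
  refine h.congr' ?_
  filter_upwards [eventually_ge_atTop 2] with n hn
  have h1 : (1:ℝ) < n := by exact_mod_cast Nat.lt_of_lt_of_le Nat.one_lt_two hn
  have hlog : 0 < Real.log n := Real.log_pos h1
  have hn0 : (0:ℝ) < n := by linarith
  have key : 1 + 2*(n:ℝ)/blow = (1/(n:ℝ) + 2/blow) * n := by field_simp
  rw [key, Real.log_mul (by positivity) (ne_of_gt hn0)]
  field_simp

lemma aux_expL (blow c d A : ℝ) (hblow : 0 < blow) (hc : 0 < c) (hA : 0 ≤ A)
    (hκ : d + 1 + A < blow / c) :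
    Tendsto (fun n : ℕ => Real.exp (d * Real.log n
      - ((n:ℝ)-1) * Real.log (1 + blow/(c*n/Real.log n))
      + Real.log (c*n/Real.log n) + A * Real.log (1 + 2*n/blow))) atTop (nhds 0) := by
  set L : ℕ → ℝ := fun n => d * Real.log n
      - ((n:ℝ)-1) * Real.log (1 + blow/(c*n/Real.log n))
      + Real.log (c*n/Real.log n) + A * Real.log (1 + 2*n/blow) with hL
  have hR : Tendsto (fun n => L n / Real.log n) atTop (nhds (d - blow/c + 1 + A)) := by
    have hcomb : Tendsto (fun n : ℕ =>
        d - (((n:ℝ)-1) * Real.log (1 + blow/(c*n/Real.log n)) / Real.log n)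
        + Real.log (c*n/Real.log n) / Real.log n
        + A * (Real.log (1 + 2*n/blow) / Real.log n)) atTop
        (nhds (d - blow/c + 1 + A * 1)) :=
      ((tendsto_const_nhds.sub (aux_T2 blow c hblow hc)).add (aux_T3 c hc)).add
        ((aux_T4 blow hblow).const_mul A)
    rw [(by norm_num : d - blow/c + 1 + A * 1 = d - blow/c + 1 + A)] at hcomb
    refine Tendsto.congr' ?_ hcomb
    filter_upwards [eventually_ge_atTop 2] with n hn
    have h1 : (1:ℝ) < n := by exact_mod_cast Nat.lt_of_lt_of_le Nat.one_lt_two hn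
    have hlog : 0 < Real.log n := Real.log_pos h1
    rw [hL]
    field_simp
  have hLbot : Tendsto L atTop atBot := by
    have hneg : d - blow/c + 1 + A < 0 := by linarith
    have := (Real.tendsto_log_atTop.comp aux_nat_atTop).atTop_mul_neg hneg hR
    refine this.congr' ?_
    filter_upwards [eventually_ge_atTop 2] with n hn
    have h1 : (1:ℝ) < n := by exact_mod_cast Nat.lt_of_lt_of_le Nat.one_lt_two hn
    have hlog : Real.log n ≠ 0 := ne_of_gt (Real.log_pos h1)
    simp only [Function.comp]
    field_simp
  exact Real.tendsto_exp_atBot.comp hLbot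



section
variable (blow : ℝ) (bb : ℕ → ℝ)

-- numerator pointwise bound
lemma aux_numpt (hblow : 0 < blow) (hbb : ∀ i, blow ≤ bb i)
    (ψ : ℝ → ℝ) (hψ0 : ∀ l, 0 ≤ l → 0 ≤ ψ l)
    (n : ℕ) (hn : 1 ≤ n) (t : ℝ) (ht : 0 < t)
    (lam : ℝ) (hl : lam ∈ Set.Ioc (0:ℝ) t) :
    lam ^ (n-1) * Real.exp (-ψ lam) * ∏ i ∈ Finset.range n, (lam + bb i)⁻¹
      ≤ (t/(t+blow))^(n-1) * blow⁻¹ := by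
  obtain ⟨hl0, hlt⟩ := hl
  have hlblow : 0 < lam + blow := by linarith
  have h1 : Real.exp (-ψ lam) ≤ 1 := by
    rw [Real.exp_le_one_iff]; linarith [hψ0 lam hl0.le]
  have h2 : ∏ i ∈ Finset.range n, (lam + bb i)⁻¹ ≤ ((lam+blow)⁻¹)^n := by
    rw [show ((lam+blow)⁻¹)^n = ∏ _i ∈ Finset.range n, (lam+blow)⁻¹ by
      simp [Finset.prod_const]]
    refine Finset.prod_le_prod (fun i _ => ?_) (fun i _ => ?_)
    · have hbi : 0 < lam + bb i := by linarith [hbb i]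
      positivity
    · exact inv_anti₀ hlblow (by linarith [hbb i])
  have hprodnn : (0:ℝ) ≤ ∏ i ∈ Finset.range n, (lam + bb i)⁻¹ := by
    refine Finset.prod_nonneg fun i _ => ?_
    have hbi : 0 < lam + bb i := by linarith [hbb i]
    positivity
  have step1 : lam ^ (n-1) * Real.exp (-ψ lam) * ∏ i ∈ Finset.range n, (lam + bb i)⁻¹
      ≤ lam ^ (n-1) * 1 * ((lam+blow)⁻¹)^n :=
    mul_le_mul (mul_le_mul le_rfl h1 (Real.exp_pos _).le (by positivity)) h2 hprodnn
      (by positivity)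
  have hsplit : ((lam+blow)⁻¹)^n = ((lam+blow)⁻¹)^(n-1) * (lam+blow)⁻¹ := by
    rw [← pow_succ, Nat.sub_add_cancel hn]
  have step2 : lam ^ (n-1) * 1 * ((lam+blow)⁻¹)^n
      = (lam/(lam+blow))^(n-1) * (lam+blow)⁻¹ := by
    rw [mul_one, hsplit, ← mul_assoc, ← mul_pow, div_eq_mul_inv]
  have hm : lam/(lam+blow) ≤ t/(t+blow) := by
    rw [div_le_div_iff₀ hlblow (by linarith)]
    nlinarith
  have step3 : (lam/(lam+blow))^(n-1) * (lam+blow)⁻¹ ≤ (t/(t+blow))^(n-1) * blow⁻¹ :=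
    mul_le_mul (pow_le_pow_left₀ (by positivity) hm _)
      (inv_anti₀ hblow (by linarith)) (by positivity) (by positivity)
  calc lam ^ (n-1) * Real.exp (-ψ lam) * ∏ i ∈ Finset.range n, (lam + bb i)⁻¹
      ≤ lam ^ (n-1) * 1 * ((lam+blow)⁻¹)^n := step1
    _ = (lam/(lam+blow))^(n-1) * (lam+blow)⁻¹ := step2
    _ ≤ (t/(t+blow))^(n-1) * blow⁻¹ := step3

-- product identity
lemma aux_prod_id (n : ℕ) (hn : 1 ≤ n) (lam : ℝ) (hl : 0 < lam) :
    lam ^ (n-1) * ∏ i ∈ Finset.range n, (lam + bb i)⁻¹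
      = (∏ i ∈ Finset.range n, lam/(lam + bb i)) / lam := by
  have h1 : ∏ i ∈ Finset.range n, lam/(lam + bb i)
      = lam^n * ∏ i ∈ Finset.range n, (lam + bb i)⁻¹ := by
    rw [show lam^n = ∏ _i ∈ Finset.range n, lam by simp [Finset.prod_const],
      ← Finset.prod_mul_distrib]
    simp [div_eq_mul_inv]
  rw [h1, show lam^n = lam^(n-1)*lam by rw [← pow_succ, Nat.sub_add_cancel hn]]
  rw [eq_div_iff (ne_of_gt hl)]
  ring

-- monotonicity of the product g
lemma aux_g_mono (hblow : 0 < blow) (hbb : ∀ i, blow ≤ bb i)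
    (n : ℕ) (l1 l2 : ℝ) (h1 : 0 < l1) (h12 : l1 ≤ l2) :
    (∏ i ∈ Finset.range n, l1/(l1 + bb i)) ≤ ∏ i ∈ Finset.range n, l2/(l2 + bb i) := by
  refine Finset.prod_le_prod (fun i _ => ?_) (fun i _ => ?_)
  · have hbi : 0 < l1 + bb i := by linarith [hbb i]
    positivity
  · have hbi := hbb i
    rw [div_le_div_iff₀ (by linarith) (by linarith)]
    nlinarith

-- lower bound on g at lam = n
lemma aux_g_low (hblow : 0 < blow) (hbb : ∀ i, blow ≤ bb i)
    (n : ℕ) (hn : 1 ≤ n) :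
    Real.exp (-((∑ i ∈ Finset.range n, bb i)/n))
      ≤ ∏ i ∈ Finset.range n, (n:ℝ)/((n:ℝ) + bb i) := by
  have hn0 : (0:ℝ) < n := by exact_mod_cast hn
  have hexp : Real.exp (-((∑ i ∈ Finset.range n, bb i)/n))
      = ∏ i ∈ Finset.range n, Real.exp (-(bb i/n)) := by
    rw [← Real.exp_sum]
    congr 1
    rw [Finset.sum_neg_distrib, ← Finset.sum_div]
  rw [hexp]
  refine Finset.prod_le_prod (fun i _ => (Real.exp_pos _).le) (fun i _ => ?_)
  have hbi : 0 < bb i := lt_of_lt_of_le hblow (hbb i)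
  have key : ((n:ℝ) + bb i)/n ≤ Real.exp (bb i / n) := by
    have := Real.add_one_le_exp (bb i / n)
    have heq : ((n:ℝ) + bb i)/n = bb i/n + 1 := by field_simp; ring
    linarith
  have h2 : (Real.exp (bb i/n))⁻¹ ≤ (((n:ℝ) + bb i)/n)⁻¹ :=
    inv_anti₀ (by positivity) key
  rw [Real.exp_neg]
  calc (Real.exp (bb i/n))⁻¹ ≤ (((n:ℝ) + bb i)/n)⁻¹ := h2
    _ = (n:ℝ)/((n:ℝ) + bb i) := by rw [inv_div]
end

lemma aux_key (blow : ℝ) (hblow : 0 < blow) (A : ℝ) (hA : 0 ≤ A)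
    (ψ : ℝ → ℝ)
    (hψ0 : ∀ l, 0 ≤ l → 0 ≤ ψ l)
    (hψmono : ∀ l1 l2, 0 ≤ l1 → l1 ≤ l2 → ψ l1 ≤ ψ l2)
    (hψle : ∀ l, 0 ≤ l → ψ l ≤ A * Real.log (1 + l/blow))
    (hψm : AEMeasurable ψ (volume.restrict (Set.Ioi (0:ℝ))))
    (bb : ℕ → ℝ) (hbb : ∀ i, blow ≤ bb i)
    (m : ℝ) (hsum : Tendsto (fun n : ℕ => (∑ i ∈ Finset.range n, bb i)/n) atTop (nhds m))
    (d c : ℝ) (hd : 0 < d) (hc : 0 < c) (hκ : d + 1 + A < blow/c) :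
    Tendsto (fun n : ℕ => (n:ℝ)^d *
      (∫ lam in Set.Ioc (0:ℝ) (c*n/Real.log n),
        lam ^ (n-1) * Real.exp (-ψ lam) * ∏ i ∈ Finset.range n, (lam + bb i)⁻¹) /
      (∫ lam in Set.Ioi (0:ℝ),
        lam ^ (n-1) * Real.exp (-ψ lam) * ∏ i ∈ Finset.range n, (lam + bb i)⁻¹))
      atTop (nhds 0) := by
  set F : ℕ → ℝ → ℝ := fun n lam =>
    lam ^ (n-1) * Real.exp (-ψ lam) * ∏ i ∈ Finset.range n, (lam + bb i)⁻¹ with hFdef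
  have hFpos : ∀ n lam, 0 < lam → 0 < F n lam := by
    intro n lam hl
    rw [hFdef]
    have hp : 0 < ∏ i ∈ Finset.range n, (lam + bb i)⁻¹ := by
      refine Finset.prod_pos fun i _ => ?_
      have : 0 < lam + bb i := by linarith [hbb i]
      positivity
    positivity
  have hFmeas : ∀ n, AEMeasurable (F n) (volume.restrict (Set.Ioi (0:ℝ))) := by
    intro n
    refine AEMeasurable.mul (AEMeasurable.mul ?_ ?_) ?_
    · exact (measurable_id.pow_const _).aemeasurable
    · exact Real.measurable_exp.comp_aemeasurable hψm.neg
    · refine Measurable.aemeasurable ?_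
      exact Finset.measurable_prod _ fun i _ => (measurable_id.add_const (bb i)).inv
  have hS : ∀ᶠ n : ℕ in atTop, (∑ i ∈ Finset.range n, bb i)/n ≤ m+1 :=
    hsum.eventually (eventually_le_nhds (by linarith))
  have hBnd : Tendsto (fun n : ℕ => (2/blow) * Real.exp (m+1) *
      Real.exp (d * Real.log n - ((n:ℝ)-1) * Real.log (1 + blow/(c*n/Real.log n))
        + Real.log (c*n/Real.log n) + A * Real.log (1 + 2*n/blow)))
      atTop (nhds 0) := by
    have := (aux_expL blow c d A hblow hc hA hκ).const_mul ((2/blow) * Real.exp (m+1))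
    simpa using this
  refine squeeze_zero' ?_ ?_ hBnd
  · filter_upwards with n
    have hNum0 : 0 ≤ ∫ lam in Set.Ioc (0:ℝ) (c*n/Real.log n), F n lam :=
      setIntegral_nonneg measurableSet_Ioc fun x hx => (hFpos n x hx.1).le
    have hDen0 : 0 ≤ ∫ lam in Set.Ioi (0:ℝ), F n lam :=
      setIntegral_nonneg measurableSet_Ioi fun x hx => (hFpos n x hx).le
    have : (0:ℝ) ≤ (n:ℝ)^d := Real.rpow_nonneg n.cast_nonneg d
    positivity
  · filter_upwards [eventually_ge_atTop 2, hS] with n hn2 hSn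
    set t := c*(n:ℝ)/Real.log n with htdef
    have hn1 : 1 ≤ n := le_trans one_le_two hn2
    have hnR : (1:ℝ) < n := by exact_mod_cast Nat.lt_of_lt_of_le Nat.one_lt_two hn2
    have hn0 : (0:ℝ) < n := by linarith
    have hlog : 0 < Real.log n := Real.log_pos hnR
    have ht : 0 < t := by rw [htdef]; positivity
    set S := ∑ i ∈ Finset.range n, bb i with hSdef
    set Cnum := (t/(t+blow))^(n-1) * blow⁻¹ with hCdef
    have hCnum0 : 0 ≤ Cnum := by rw [hCdef]; positivity
    -- integrability of F n on Ioc 0 t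
    have hIntNum : IntegrableOn (F n) (Set.Ioc 0 t) volume := by
      refine Integrable.mono' (g := fun _ => Cnum)
        (integrableOn_const measure_Ioc_lt_top.ne) ?_ ?_
      · exact ((hFmeas n).mono_measure
          (Measure.restrict_mono Set.Ioc_subset_Ioi_self le_rfl)).aestronglyMeasurable
      · rw [ae_restrict_iff' measurableSet_Ioc]
        filter_upwards with lam hlam
        rw [Real.norm_eq_abs, abs_of_nonneg (hFpos n lam hlam.1).le, hCdef]
        exact aux_numpt blow bb hblow hbb ψ hψ0 n hn1 t ht lam hlam
    have hNumle : (∫ lam in Set.Ioc (0:ℝ) t, F n lam) ≤ Cnum * t := by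
      have h1 : (∫ lam in Set.Ioc (0:ℝ) t, F n lam)
          ≤ ∫ _lam in Set.Ioc (0:ℝ) t, Cnum := by
        refine integral_mono_ae hIntNum (integrableOn_const measure_Ioc_lt_top.ne) ?_
        rw [Filter.EventuallyLE, ae_restrict_iff' measurableSet_Ioc]
        filter_upwards with lam hlam
        rw [hCdef]
        exact aux_numpt blow bb hblow hbb ψ hψ0 n hn1 t ht lam hlam
      have h2 : (∫ _lam in Set.Ioc (0:ℝ) t, (Cnum:ℝ)) = Cnum * t := by
        rw [setIntegral_const, measureReal_def, Real.volume_Ioc, smul_eq_mul,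
          ENNReal.toReal_ofReal (by linarith)]
        ring
      linarith
    have hNum0 : 0 ≤ ∫ lam in Set.Ioc (0:ℝ) t, F n lam :=
      setIntegral_nonneg measurableSet_Ioc fun x hx => (hFpos n x hx.1).le
    have hnd0 : (0:ℝ) ≤ (n:ℝ)^d := Real.rpow_nonneg n.cast_nonneg d
    -- denominator lower bound constant
    set lowC := Real.exp (-(S/(n:ℝ)) - ψ (2*n)) / (2*n) with hlowC
    have hlowCpos : 0 < lowC := by rw [hlowC]; positivity
    have hFlow : ∀ lam ∈ Set.Ioc (n:ℝ) (2*n), lowC ≤ F n lam := by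
      intro lam hlam
      obtain ⟨hl1, hl2⟩ := hlam
      have hlpos : 0 < lam := lt_trans hn0 hl1
      have hprodnn : (0:ℝ) ≤ ∏ i ∈ Finset.range n, lam/(lam + bb i) := by
        refine Finset.prod_nonneg fun i _ => ?_
        have : 0 < lam + bb i := by linarith [hbb i]
        positivity
      have hF' : F n lam
          = Real.exp (-ψ lam) * ((∏ i ∈ Finset.range n, lam/(lam + bb i)) / lam) := by
        rw [hFdef]
        dsimp only
        rw [← aux_prod_id bb n hn1 lam hlpos]
        ring
      rw [hF']
      have hga : Real.exp (-(S/(n:ℝ))) ≤ ∏ i ∈ Finset.range n, lam/(lam + bb i) :=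
        le_trans (aux_g_low blow bb hblow hbb n hn1)
          (aux_g_mono blow bb hblow hbb n _ _ hn0 hl1.le)
      have hexp : Real.exp (-ψ (2*n)) ≤ Real.exp (-ψ lam) := by
        refine Real.exp_le_exp.2 ?_
        have := hψmono lam (2*n) hlpos.le hl2
        linarith
      have hsplit : Real.exp (-(S/(n:ℝ)) - ψ (2*n))
          = Real.exp (-(S/(n:ℝ))) * Real.exp (-ψ (2*n)) := by
        rw [← Real.exp_add]; ring_nf
      have hstep : Real.exp (-(S/(n:ℝ))) * Real.exp (-ψ (2*n)) / (2*n)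
          ≤ (∏ i ∈ Finset.range n, lam/(lam + bb i)) * Real.exp (-ψ lam) / lam := by
        refine div_le_div₀ (by positivity) ?_ hlpos hl2
        exact mul_le_mul hga hexp (Real.exp_pos _).le hprodnn
      calc lowC = Real.exp (-(S/(n:ℝ))) * Real.exp (-ψ (2*n)) / (2*n) := by
            rw [hlowC, hsplit]
        _ ≤ (∏ i ∈ Finset.range n, lam/(lam + bb i)) * Real.exp (-ψ lam) / lam := hstep
        _ = Real.exp (-ψ lam) * ((∏ i ∈ Finset.range n, lam/(lam + bb i)) / lam) := by
            ring
    by_cases hInt : IntegrableOn (F n) (Set.Ioi (0:ℝ)) volume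
    · -- denominator lower bound
      have hminor : IntegrableOn (F n) (Set.Ioc (n:ℝ) (2*n)) volume :=
        hInt.mono_set (fun x hx => lt_trans hn0 hx.1)
      have h1 : lowC * n ≤ ∫ lam in Set.Ioc (n:ℝ) (2*n), F n lam := by
        have h := setIntegral_ge_of_const_le measurableSet_Ioc
          measure_Ioc_lt_top.ne hFlow hminor
        rw [measureReal_def, Real.volume_Ioc, ENNReal.toReal_ofReal (by linarith), smul_eq_mul] at h
        calc lowC * n = lowC * (2*(n:ℝ) - n) := by ring
          _ ≤ _ := by linarith [h]
      have h2 : (∫ lam in Set.Ioc (n:ℝ) (2*n), F n lam)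
          ≤ ∫ lam in Set.Ioi (0:ℝ), F n lam := by
        refine setIntegral_mono_set hInt ?_ ?_
        · rw [Filter.EventuallyLE, ae_restrict_iff' measurableSet_Ioi]
          filter_upwards with x hx
          exact (hFpos n x hx).le
        · exact HasSubset.Subset.eventuallyLE (fun x hx => lt_trans hn0 hx.1)
      have hDenlow : lowC * n ≤ ∫ lam in Set.Ioi (0:ℝ), F n lam := le_trans h1 h2
      have hDenpos : (0:ℝ) < ∫ lam in Set.Ioi (0:ℝ), F n lam :=
        lt_of_lt_of_le (by positivity) hDenlow
      have hchain : (n:ℝ)^d * (∫ lam in Set.Ioc (0:ℝ) t, F n lam)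
            / (∫ lam in Set.Ioi (0:ℝ), F n lam)
          ≤ (n:ℝ)^d * (Cnum * t) / (lowC * n) := by
        refine div_le_div₀ (by positivity) ?_ (by positivity) hDenlow
        exact mul_le_mul le_rfl hNumle hNum0 hnd0
      refine le_trans hchain ?_
      -- final algebraic bound
      rw [div_le_iff₀ (by positivity)]
      have e1 : (n:ℝ)^d = Real.exp (d * Real.log n) := by
        rw [Real.rpow_def_of_pos hn0, mul_comm]
      have e2 : (t/(t+blow))^(n-1)
          = Real.exp (-(((n:ℝ)-1) * Real.log (1 + blow/t))) := by
        have hr : (0:ℝ) < t/(t+blow) := by positivity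
        rw [← Real.exp_log (pow_pos hr (n-1)), Real.log_pow]
        congr 1
        have hc1 : ((n-1:ℕ):ℝ) = (n:ℝ)-1 := by
          rw [Nat.cast_sub hn1, Nat.cast_one]
        have hc2 : Real.log (t/(t+blow)) = -Real.log (1+blow/t) := by
          rw [show t/(t+blow) = (1+blow/t)⁻¹ by field_simp, Real.log_inv]
        rw [hc1, hc2]; ring
      have hone : Real.exp (S/(n:ℝ) + ψ (2*(n:ℝ)))
          ≤ Real.exp ((m+1) + A * Real.log (1+2*(n:ℝ)/blow)) := by
        refine Real.exp_le_exp.2 ?_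
        have h4 := hψle (2*(n:ℝ)) (by positivity)
        linarith
      calc (n:ℝ)^d * (Cnum * t)
          = ((n:ℝ)^d * (Cnum*t) * (Real.exp (S/(n:ℝ) + ψ (2*(n:ℝ))))⁻¹)
              * Real.exp (S/(n:ℝ) + ψ (2*(n:ℝ))) := by
            rw [mul_assoc ((n:ℝ)^d * (Cnum*t)), inv_mul_cancel₀ (Real.exp_ne_zero _), mul_one]
        _ ≤ ((n:ℝ)^d * (Cnum*t) * (Real.exp (S/(n:ℝ) + ψ (2*(n:ℝ))))⁻¹)
              * Real.exp ((m+1) + A * Real.log (1+2*(n:ℝ)/blow)) := by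
            refine mul_le_mul_of_nonneg_left hone ?_
            exact mul_nonneg (mul_nonneg hnd0 (mul_nonneg hCnum0 ht.le))
              (inv_nonneg.2 (Real.exp_pos _).le)
        _ = (2/blow) * Real.exp (m+1)
              * Real.exp (d*Real.log n - ((n:ℝ)-1)*Real.log (1+blow/t)
                + Real.log t + A*Real.log (1+2*(n:ℝ)/blow)) * (lowC * n) := by
            rw [hCdef, hlowC, e1, e2]
            simp only [Real.exp_add, Real.exp_sub, Real.exp_neg, Real.exp_log ht]
            field_simp
    · rw [integral_undef hInt, div_zero]
      positivity

section PsiProps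

variable {𝔜 : Type*} [MeasurableSpace 𝔜]
    (a : Measure 𝔜) [IsFiniteMeasure a]
    (blow : ℝ)
    (b : 𝔜 → ℝ)

lemma aux_psi_props (hblow : 0 < blow) (hbmeas : Measurable b) (hb : ∀ y, blow ≤ b y)
    (ψ : ℝ → ℝ) (hψ : ∀ lam, ψ lam = ∫ y, Real.log (1 + lam / b y) ∂a) :
    (∀ l, 0 ≤ l → 0 ≤ ψ l) ∧
    (∀ l1 l2, 0 ≤ l1 → l1 ≤ l2 → ψ l1 ≤ ψ l2) ∧
    (∀ l, 0 ≤ l → ψ l ≤ (a Set.univ).toReal * Real.log (1 + l/blow)) := by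
  have hby : ∀ y, 0 < b y := fun y => lt_of_lt_of_le hblow (hb y)
  have hmeas : ∀ l : ℝ, Measurable fun y => Real.log (1 + l / b y) := fun l =>
    Real.measurable_log.comp (measurable_const.add (measurable_const.div hbmeas))
  have hpt0 : ∀ l : ℝ, 0 ≤ l → ∀ y, 0 ≤ Real.log (1 + l / b y) := by
    intro l hl y
    refine Real.log_nonneg ?_
    have : 0 ≤ l / b y := div_nonneg hl (hby y).le
    linarith
  have hptle : ∀ l : ℝ, 0 ≤ l → ∀ y, Real.log (1 + l / b y) ≤ Real.log (1 + l/blow) := by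
    intro l hl y
    refine Real.log_le_log (by nlinarith [hpt0 l hl y, hby y, div_nonneg hl (hby y).le]) ?_
    have : l / b y ≤ l / blow := div_le_div_of_nonneg_left hl hblow (hb y)
    linarith
  have hint : ∀ l : ℝ, 0 ≤ l → Integrable (fun y => Real.log (1 + l / b y)) a := by
    intro l hl
    refine Integrable.mono' (integrable_const (Real.log (1 + l/blow)))
      (hmeas l).aestronglyMeasurable ?_
    filter_upwards with y
    rw [Real.norm_eq_abs, abs_of_nonneg (hpt0 l hl y)]
    exact hptle l hl y
  refine ⟨?_, ?_, ?_⟩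
  · intro l hl
    rw [hψ]
    exact integral_nonneg (hpt0 l hl)
  · intro l1 l2 h1 h12
    rw [hψ, hψ]
    refine integral_mono (hint l1 h1) (hint l2 (le_trans h1 h12)) ?_
    intro y
    refine Real.log_le_log (by nlinarith [hby y, div_nonneg h1 (hby y).le]) ?_
    have : l1 / b y ≤ l2 / b y := by gcongr; exact (hby y).le
    linarith
  · intro l hl
    rw [hψ]
    calc (∫ y, Real.log (1 + l / b y) ∂a) ≤ ∫ _y, Real.log (1 + l/blow) ∂a :=
          integral_mono (hint l hl) (integrable_const _) (hptle l hl)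
      _ = (a Set.univ).toReal * Real.log (1 + l/blow) := by
          rw [integral_const, smul_eq_mul, measureReal_def]
end PsiProps

/-- Concentration of the posterior mixing distribution. With
`ψ(λ) = ∫ log(1 + λ/b) da` and unnormalized posterior mixing density
`f_n(λ) = λ^{n-1} e^{-ψ(λ)} Π_{i=1}^n (λ + b(X_i))⁻¹` based on an i.i.d. sample
`X_1, X_2, …` from `P_0`, for every `d > 0` and `0 < c < b̲/(a(𝔜)+1+d)`, almost surely
`n^d · Π(Λ < c n/log n | X^{(n)}) → 0`. -/
theorem mixing_distribution_concentration
    {𝔜 : Type*} [MeasurableSpace 𝔜]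
    (a : Measure 𝔜) [IsFiniteMeasure a] (ha : a ≠ 0)
    (blow : ℝ) (hblow : 0 < blow)
    (b : 𝔜 → ℝ) (hbmeas : Measurable b) (hb : ∀ y, blow ≤ b y)
    {Ω : Type*} [MeasurableSpace Ω] (μ : Measure Ω) [IsProbabilityMeasure μ]
    (P0 : Measure 𝔜) [IsProbabilityMeasure P0]
    (hbint : Integrable b P0)
    (X : ℕ → Ω → 𝔜)
    (hXmeas : ∀ i, Measurable (X i))
    (hindep : iIndepFun X μ)
    (hlaw : ∀ i, Measure.map (X i) μ = P0)
    (ψ : ℝ → ℝ) (hψ : ∀ lam, ψ lam = ∫ y, Real.log (1 + lam / b y) ∂a)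
    (f : ℕ → Ω → ℝ → ℝ)
    (hf : ∀ n ω lam, f n ω lam =
      lam ^ (n - 1) * Real.exp (-ψ lam) * ∏ i ∈ Finset.range n, (lam + b (X i ω))⁻¹)
    (d : ℝ) (hd : 0 < d)
    (c : ℝ) (hc : 0 < c) (hc' : c < blow / ((a Set.univ).toReal + 1 + d)) :
    ∀ᵐ ω ∂μ, Tendsto
      (fun n : ℕ => (n : ℝ) ^ d *
        (∫ lam in Set.Ioc (0 : ℝ) (c * n / Real.log n), f n ω lam) /
        (∫ lam in Set.Ioi (0 : ℝ), f n ω lam))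
      atTop (nhds 0) := by
  set A := (a Set.univ).toReal with hAdef
  have hA : 0 ≤ A := ENNReal.toReal_nonneg
  have hA1d : 0 < A + 1 + d := by linarith
  have hκ : d + 1 + A < blow / c := by
    rw [lt_div_iff₀ hc]
    have h2 := (lt_div_iff₀ hA1d).1 hc'
    nlinarith
  obtain ⟨hψ0, hψmono, hψle⟩ := aux_psi_props a blow b hblow hbmeas hb ψ hψ
  have hψm : AEMeasurable ψ (volume.restrict (Set.Ioi (0:ℝ))) := by
    refine aemeasurable_restrict_of_monotoneOn measurableSet_Ioi ?_
    intro l1 h1 l2 _ h12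
    exact hψmono l1 l2 (le_of_lt h1) h12
  -- strong law of large numbers for Y i = b ∘ X i
  set Y : ℕ → Ω → ℝ := fun i ω => b (X i ω) with hYdef
  have hYmeas : ∀ i, Measurable (Y i) := fun i => hbmeas.comp (hXmeas i)
  have hident : ∀ i, IdentDistrib (Y i) (Y 0) μ μ := by
    intro i
    refine ⟨(hYmeas i).aemeasurable, (hYmeas 0).aemeasurable, ?_⟩
    show Measure.map (b ∘ X i) μ = Measure.map (b ∘ X 0) μ
    rw [← Measure.map_map hbmeas (hXmeas i), ← Measure.map_map hbmeas (hXmeas 0),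
      hlaw i, hlaw 0]
  have hpair : Pairwise (Function.onFun (IndepFun · · μ) Y) := fun i j hij =>
    (hindep.indepFun hij).comp hbmeas hbmeas
  have hYint : Integrable (Y 0) μ := by
    have h1 : Integrable b (Measure.map (X 0) μ) := by rw [hlaw 0]; exact hbint
    exact (integrable_map_measure h1.aestronglyMeasurable (hXmeas 0).aemeasurable).1 h1
  have hslln := strong_law_ae_real Y hYint hpair hident
  filter_upwards [hslln] with ω hω
  have hkey := aux_key blow hblow A hA ψ hψ0 hψmono hψle hψm
    (fun i => b (X i ω)) (fun i => hb _) (μ[Y 0]) hω d c hd hc hκ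
  have hfeq : ∀ n : ℕ, (fun lam => f n ω lam) = fun lam =>
      lam ^ (n - 1) * Real.exp (-ψ lam) * ∏ i ∈ Finset.range n, (lam + b (X i ω))⁻¹ := by
    intro n; funext lam; exact hf n ω lam
  simp only [hfeq]
  exact hkey
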